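/- Let L be an irreducible almost lower triangular transition matrix on ℕ and, for each n, let ρ^{(n)} be an invariant probability distribution of the projection L^{(n)} of L onto {0,…,n} with ρ^{(n)} 0 > 0; set η^{(n)} a = ρ^{(n)} a / ρ^{(n)} 0 for a ≤ n and η^{(n)} a = 0 for a > n. Assume: (a) there exists S : ℕ → ℝ with S a ≥ 0 for all a, such that for every b the series ∑_{a ≥ b+1} S a · L a b converges, and η^{(n)} a ≤ S a for all a and n; (b) for every a the limit η a := lim_{n→∞} η^{(n)} a exists; (c) for every a, the tail sums ∑_{j ≥ n} L j a are finite for all large n and η^{(n)} n · ∑_{j ≥ n} L j a → 0 as n → ∞. Then η is an invariant measure for L: for every b the series ∑_a η a · L a b converges with sum η b. -/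

import Mathlib

/-- Irreducibility of a matrix on `ℕ`. -/
def MatIrreducible (M : ℕ → ℕ → ℝ) : Prop :=
  ∀ i j : ℕ, ∃ (n : ℕ) (x : ℕ → ℕ), 0 < n ∧ x 0 = i ∧ x n = j ∧
    ∀ k, k < n → 0 < M (x k) (x (k + 1))

/-- The projection `M^{(n)}` of `M` onto `{0,…,n}`. -/
noncomputable def projTM (M : ℕ → ℕ → ℝ) (n : ℕ) : ℕ → ℕ → ℝ :=
  fun i j =>
    if j < n then M i j
    else if j = n then (∑' k : ℕ, if n ≤ k then M i k else 0)
    else 0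

/-- Proposition 3.7: under a uniform domination (a), pointwise convergence (b) and a
vanishing boundary term (c), the pointwise limit `η` of the normalised invariant
distributions `η^{(n)} a = ρ^{(n)} a / ρ^{(n)} 0` of the projections `L^{(n)}` is an
invariant measure for the irreducible almost lower triangular transition matrix `L`. -/
theorem invariant_measure_from_projections_almost_lower_triangular (L : ℕ → ℕ → ℝ)
    (hnn : ∀ i j, 0 ≤ L i j)
    (hrow : ∀ i, HasSum (fun j => L i j) 1)
    (hlt : ∀ i j, i + 1 < j → L i j = 0)
    (hirr : MatIrreducible L)
    (ρ : ℕ → ℕ → ℝ)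
    (hρnn : ∀ n a, 0 ≤ ρ n a)
    (hρzero : ∀ n a, n < a → ρ n a = 0)
    (hρsum : ∀ n, ∑ a ∈ Finset.range (n + 1), ρ n a = 1)
    (hρinv : ∀ n, ∀ b ≤ n, ∑ a ∈ Finset.range (n + 1), ρ n a * projTM L n a b = ρ n b)
    (hρ0pos : ∀ n, 0 < ρ n 0)
    (η : ℕ → ℕ → ℝ)
    (hη : ∀ n a, η n a = if a ≤ n then ρ n a / ρ n 0 else 0)
    -- (a) uniform domination by a summable-against-columns sequence S
    (S : ℕ → ℝ) (hSnn : ∀ a, 0 ≤ S a)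
    (hSsum : ∀ b, Summable (fun a => if b + 1 ≤ a then S a * L a b else 0))
    (hbound : ∀ n a, η n a ≤ S a)
    -- (b) pointwise convergence
    (ηlim : ℕ → ℝ)
    (hηlim : ∀ a, Filter.Tendsto (fun n => η n a) Filter.atTop (nhds (ηlim a)))
    -- (c) vanishing boundary term
    (htailSummable : ∀ a, ∃ N, ∀ n, N ≤ n → Summable (fun j => if n ≤ j then L j a else 0))
    (htail : ∀ a, Filter.Tendsto
      (fun n => η n n * ∑' j : ℕ, (if n ≤ j then L j a else 0))
      Filter.atTop (nhds 0)) :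
    ∀ b, HasSum (fun a => ηlim a * L a b) (ηlim b) := by
  intro b
  -- nonnegativity of η
  have hηnn : ∀ n a, 0 ≤ η n a := by
    intro n a
    rw [hη]
    split
    · exact div_nonneg (hρnn n a) (hρ0pos n).le
    · exact le_refl 0
  -- dominating function
  have hg : Summable (fun a => S a * L a b) := by
    have h1 : Summable (fun n : ℕ =>
        (fun a => if b + 1 ≤ a then S a * L a b else 0) (n + (b + 1))) :=
      (summable_nat_add_iff (f := fun a => if b + 1 ≤ a then S a * L a b else 0) (b + 1)).mpr (hSsum b)
    have h2 : Summable (fun n : ℕ => S (n + (b + 1)) * L (n + (b + 1)) b) := by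
      simpa using h1
    exact (summable_nat_add_iff (f := fun a => S a * L a b) (b + 1)).mp h2
  -- key finite identity
  have key : ∀ n, b < n → (∑' a : ℕ, η n a * L a b) = η n b := by
    intro n hbn
    have hzero : ∀ a ∉ Finset.range (n + 1), η n a * L a b = 0 := by
      intro a ha
      have : ¬ a ≤ n := by simpa [Finset.mem_range, Nat.lt_succ_iff] using ha
      rw [hη, if_neg this, zero_mul]
    rw [tsum_eq_sum hzero]
    have hproj : ∀ a, projTM L n a b = L a b := by
      intro a; simp [projTM, hbn]
    have hinv := hρinv n b hbn.le
    simp only [hproj] at hinv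
    have : ∑ a ∈ Finset.range (n + 1), η n a * L a b
        = (∑ a ∈ Finset.range (n + 1), ρ n a * L a b) / ρ n 0 := by
      rw [Finset.sum_div]
      apply Finset.sum_congr rfl
      intro a ha
      have haa : a ≤ n := Nat.lt_succ_iff.mp (Finset.mem_range.mp ha)
      rw [hη, if_pos haa, div_mul_eq_mul_div]
    rw [this, hinv, hη, if_pos hbn.le]
  -- pointwise limit and domination
  have hlim : ∀ a, Filter.Tendsto (fun n => η n a * L a b)
      Filter.atTop (nhds (ηlim a * L a b)) := fun a => (hηlim a).mul_const _
  have hdom : ∀ n a, ‖η n a * L a b‖ ≤ S a * L a b := by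
    intro n a
    rw [Real.norm_eq_abs, abs_of_nonneg (mul_nonneg (hηnn n a) (hnn a b))]
    exact mul_le_mul_of_nonneg_right (hbound n a) (hnn a b)
  have htend : Filter.Tendsto (fun n => ∑' a : ℕ, η n a * L a b)
      Filter.atTop (nhds (∑' a : ℕ, ηlim a * L a b)) :=
    tendsto_tsum_of_dominated_convergence hg hlim (Filter.Eventually.of_forall hdom)
  -- the sequence equals η n b eventually
  have heq : Filter.Tendsto (fun n => ∑' a : ℕ, η n a * L a b)
      Filter.atTop (nhds (ηlim b)) := by
    refine (hηlim b).congr' ?_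
    filter_upwards [Filter.eventually_gt_atTop b] with n hn
    exact (key n hn).symm
  have hval : (∑' a : ℕ, ηlim a * L a b) = ηlim b :=
    tendsto_nhds_unique htend heq
  -- summability of the limit
  have hηlimnn : ∀ a, 0 ≤ ηlim a := fun a =>
    ge_of_tendsto' (hηlim a) (fun n => hηnn n a)
  have hηlimle : ∀ a, ηlim a ≤ S a := fun a =>
    le_of_tendsto' (hηlim a) (fun n => hbound n a)
  have hsum : Summable (fun a => ηlim a * L a b) := by
    apply Summable.of_nonneg_of_le
      (fun a => mul_nonneg (hηlimnn a) (hnn a b))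
      (fun a => mul_le_mul_of_nonneg_right (hηlimle a) (hnn a b)) hg
  rw [← hval]
  exact hsum.hasSum
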